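/- Suppose there exists γ* ∈ Γ₁ with A[γ*] ≻ 0, and suppose for every (x,t) ∈ S_SDP \ S the subspace R'(x,t) is nontrivial (contains a nonzero vector). Then conv(S) = S_SDP. -/

import Mathlib

noncomputable section
open Matrix Set

/-- Dot-product style inner product on `ℝ × (Fin m → ℝ)` (i.e. `ℝ^{1+m}`). -/
def ipr {m : ℕ} (v w : ℝ × (Fin m → ℝ)) : ℝ := v.1 * w.1 + v.2 ⬝ᵥ w.2

/-- `A(γ₀, γ) = γ₀ A₀ + ∑ i, γ i • A i`. -/
def Amix {ι : Type*} [Fintype ι] {m : ℕ} (A0 : Matrix ι ι ℝ)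
    (A : Fin m → Matrix ι ι ℝ) (g0 : ℝ) (g : Fin m → ℝ) : Matrix ι ι ℝ :=
  g0 • A0 + ∑ i, g i • A i

/-- `b(γ) = b₀ + ∑ i, γ i • b i` (the `γ₀ = 1` slice). -/
def bmix {ι : Type*} {m : ℕ} (b0 : ι → ℝ) (b : Fin m → ι → ℝ) (g : Fin m → ℝ) : ι → ℝ :=
  b0 + ∑ i, g i • b i

/-- The cone of convex Lagrange multipliers `Γ`. -/
def Gamma {ι : Type*} [Fintype ι] {m : ℕ} (A0 : Matrix ι ι ℝ)
    (A : Fin m → Matrix ι ι ℝ) : Set (ℝ × (Fin m → ℝ)) :=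
  {p | 0 ≤ p.1 ∧ (∀ i, 0 ≤ p.2 i) ∧ (Amix A0 A p.1 p.2).PosSemidef}

/-- The slice `Γ₁` of `Γ` at `γ₀ = 1`. -/
def Gamma1 {ι : Type*} [Fintype ι] {m : ℕ} (A0 : Matrix ι ι ℝ)
    (A : Fin m → Matrix ι ι ℝ) : Set (Fin m → ℝ) :=
  {g | (∀ i, 0 ≤ g i) ∧ (Amix A0 A 1 g).PosSemidef}

/-- Polar cone with respect to `ipr`. -/
def polarCone {m : ℕ} (S : Set (ℝ × (Fin m → ℝ))) : Set (ℝ × (Fin m → ℝ)) :=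
  {v | ∀ w ∈ S, ipr v w ≤ 0}

/-- The quadratic function `x ↦ xᵀ M x + 2 bᵀ x + c`. -/
def quadF {ι : Type*} [Fintype ι] (M : Matrix ι ι ℝ) (b : ι → ℝ) (c : ℝ) (x : ι → ℝ) : ℝ :=
  x ⬝ᵥ M.mulVec x + 2 * (b ⬝ᵥ x) + c

/-- The vector `q(x) = (q₀(x), q₁(x), …, q_m(x)) ∈ ℝ^{1+m}`. -/
def qVec {ι : Type*} [Fintype ι] {m : ℕ} (A0 : Matrix ι ι ℝ) (b0 : ι → ℝ) (c0 : ℝ)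
    (A : Fin m → Matrix ι ι ℝ) (b : Fin m → ι → ℝ) (c : Fin m → ℝ)
    (x : ι → ℝ) : ℝ × (Fin m → ℝ) :=
  (quadF A0 b0 c0 x, fun i => quadF (A i) (b i) (c i) x)

/-- The first unit vector `e₀ ∈ ℝ^{1+m}`. -/
def e0 {m : ℕ} : ℝ × (Fin m → ℝ) := (1, 0)

/-- `[γ, q(x)] = q₀(x) + ∑ i, γ i * q i (x)`. -/
def brkt {ι : Type*} [Fintype ι] {m : ℕ} (A0 : Matrix ι ι ℝ) (b0 : ι → ℝ) (c0 : ℝ)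
    (A : Fin m → Matrix ι ι ℝ) (b : Fin m → ι → ℝ) (c : Fin m → ℝ)
    (g : Fin m → ℝ) (x : ι → ℝ) : ℝ :=
  quadF A0 b0 c0 x + ∑ i, g i * quadF (A i) (b i) (c i) x

/-- The projected SDP relaxation `S_SDP = {(x,t) : q(x) - 2t e₀ ∈ Γ°}`. -/
def SSDP {ι : Type*} [Fintype ι] {m : ℕ} (A0 : Matrix ι ι ℝ) (b0 : ι → ℝ) (c0 : ℝ)
    (A : Fin m → Matrix ι ι ℝ) (b : Fin m → ι → ℝ) (c : Fin m → ℝ) :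
    Set ((ι → ℝ) × ℝ) :=
  {p | qVec A0 b0 c0 A b c p.1 - (2 * p.2) • e0 ∈ polarCone (Gamma A0 A)}

/-- The QCQP epigraph `S = {(x,t) : q₀(x) ≤ 2t, q i (x) ≤ 0 ∀ i}`. -/
def Sepi {ι : Type*} [Fintype ι] {m : ℕ} (A0 : Matrix ι ι ℝ) (b0 : ι → ℝ) (c0 : ℝ)
    (A : Fin m → Matrix ι ι ℝ) (b : Fin m → ι → ℝ) (c : Fin m → ℝ) :
    Set ((ι → ℝ) × ℝ) :=
  {p | quadF A0 b0 c0 p.1 ≤ 2 * p.2 ∧ ∀ i, quadF (A i) (b i) (c i) p.1 ≤ 0}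

/-- `F` is a face of the convex cone `K`. -/
def IsFaceOf {E : Type*} [Add E] (K F : Set E) : Prop :=
  F ⊆ K ∧ ∀ y ∈ K, ∀ z ∈ K, y + z ∈ F → y ∈ F ∧ z ∈ F

/-- `G` is the minimal face of `K` containing `v`. -/
def IsMinFace {E : Type*} [Add E] (K : Set E) (v : E) (G : Set E) : Prop :=
  IsFaceOf K G ∧ v ∈ G ∧ ∀ G', IsFaceOf K G' → v ∈ G' → G ⊆ G'

/-- The set of rounding directions `R(x,t)` at a point `p` of a convex set `C`. -/
def Rset {E : Type*} [AddCommGroup E] [Module ℝ E] (C : Set E) (p : E) : Set E :=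
  {d | ∃ ε : ℝ, 0 < ε ∧ ∀ s ∈ Set.Icc (-ε) ε, p + s • d ∈ C}

/-- The first-order rounding directions `R'(x,t)`, relative to a face `G` of `Γ°`. -/
def Rset' {ι : Type*} [Fintype ι] {m : ℕ} (A0 : Matrix ι ι ℝ) (b0 : ι → ℝ) (c0 : ℝ)
    (A : Fin m → Matrix ι ι ℝ) (b : Fin m → ι → ℝ) (c : Fin m → ℝ)
    (x : ι → ℝ) (t : ℝ) (G : Set (ℝ × (Fin m → ℝ))) : Set ((ι → ℝ) × ℝ) :=
  {d | ∀ α : ℝ,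
    qVec A0 b0 c0 A b c (x + α • d.1) - (2 * (t + α * d.2)) • e0 ∈ Submodule.span ℝ G}

/-- Orthogonal complement (as a set) of a subset of `ℝ^{1+m}` w.r.t. `ipr`. -/
def orthC {m : ℕ} (G : Set (ℝ × (Fin m → ℝ))) : Set (ℝ × (Fin m → ℝ)) :=
  {v | ∀ w ∈ G, ipr v w = 0}

set_option linter.unusedSectionVars false
set_option linter.unusedVariables false
section Faces

variable {E : Type*} [AddCommGroup E] [Module ℝ E]

/-- The minimal face of `K` containing `v`, as intersection of all faces containing `v`. -/
def minFace (K : Set E) (v : E) : Set E :=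
  ⋂₀ {F | IsFaceOf K F ∧ v ∈ F}

lemma isFaceOf_self (K : Set E) : IsFaceOf K K :=
  ⟨subset_rfl, fun y hy z hz _ => ⟨hy, hz⟩⟩

variable {K : Set E} (hadd : ∀ x ∈ K, ∀ y ∈ K, x + y ∈ K)
  (hsmul : ∀ r : ℝ, 0 ≤ r → ∀ x ∈ K, r • x ∈ K)

lemma mem_minFace_self {v : E} (hv : v ∈ K) : v ∈ minFace K v :=
  Set.mem_sInter.2 fun _ hF => hF.2

lemma minFace_subset {v : E} (hv : v ∈ K) : minFace K v ⊆ K :=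
  Set.sInter_subset_of_mem ⟨isFaceOf_self K, hv⟩

lemma isFaceOf_minFace {v : E} (hv : v ∈ K) : IsFaceOf K (minFace K v) := by
  refine ⟨minFace_subset hv, fun y hy z hz hyz => ⟨?_, ?_⟩⟩
  · exact Set.mem_sInter.2 fun F hF => (hF.1.2 y hy z hz (Set.mem_sInter.1 hyz F hF)).1
  · exact Set.mem_sInter.2 fun F hF => (hF.1.2 y hy z hz (Set.mem_sInter.1 hyz F hF)).2

lemma isMinFace_minFace {v : E} (hv : v ∈ K) : IsMinFace K v (minFace K v) :=
  ⟨isFaceOf_minFace hv, mem_minFace_self hv, fun _ hF hvF => Set.sInter_subset_of_mem ⟨hF, hvF⟩⟩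

include hadd hsmul in
/-- If `v - ε • y ∈ K` with `y ∈ K`, `ε > 0`, then `ε • y` is in the minimal face of `v`. -/
lemma smul_mem_minFace {v y : E} (hv : v ∈ K) (hy : y ∈ K) {ε : ℝ} (hε : 0 < ε)
    (hsub : v - ε • y ∈ K) : ε • y ∈ minFace K v := by
  refine Set.mem_sInter.2 fun F hF => ?_
  have := hF.1.2 (v - ε • y) hsub (ε • y) (hsmul ε hε.le y hy) (by simpa using hF.2)
  exact this.2

include hadd hsmul in
/-- Elements of the minimal face can be subtracted a little from `v`. -/
lemma minFace_sub_mem {v y : E} (hv : v ∈ K) (hy : y ∈ minFace K v) :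
    ∃ ε : ℝ, 0 < ε ∧ v - ε • y ∈ K := by
  -- the "cone-style" face Gc is a face containing v, hence contains minFace
  set Gc : Set E := {y | y ∈ K ∧ ∃ ε : ℝ, 0 < ε ∧ v - ε • y ∈ K} with hGc
  have hface : IsFaceOf K Gc := by
    refine ⟨fun y hy => hy.1, fun y hyK z hzK hyz => ?_⟩
    obtain ⟨-, ε, hε, hsub⟩ := hyz
    have hy' : v - ε • (y + z) + ε • z ∈ K := hadd _ hsub _ (hsmul ε hε.le z hzK)
    have hy'' : v - ε • (y + z) + ε • z = v - ε • y := by rw [smul_add]; abel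
    have hz' : v - ε • (y + z) + ε • y ∈ K := hadd _ hsub _ (hsmul ε hε.le y hyK)
    have hz'' : v - ε • (y + z) + ε • y = v - ε • z := by rw [smul_add]; abel
    constructor
    · show y ∈ K ∧ ∃ ε : ℝ, 0 < ε ∧ v - ε • y ∈ K
      exact ⟨hyK, ε, hε, hy'' ▸ hy'⟩
    · show z ∈ K ∧ ∃ ε : ℝ, 0 < ε ∧ v - ε • z ∈ K
      exact ⟨hzK, ε, hε, hz'' ▸ hz'⟩
  have hvGc : v ∈ Gc := by
    have hhalf : v - (1/2 : ℝ) • v = (1/2 : ℝ) • v := by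
      rw [sub_eq_iff_eq_add, ← add_smul]; norm_num
    show v ∈ K ∧ ∃ ε : ℝ, 0 < ε ∧ v - ε • v ∈ K
    exact ⟨hv, 1/2, by norm_num, by rw [hhalf]; exact hsmul _ (by norm_num) v hv⟩
  have hsub : minFace K v ⊆ Gc :=
    Set.sInter_subset_of_mem (show Gc ∈ {F | IsFaceOf K F ∧ v ∈ F} from ⟨hface, hvGc⟩)
  exact (hsub hy).2

end Faces
section Faces2

variable {E : Type*} [AddCommGroup E] [Module ℝ E]
variable {K : Set E} (hadd : ∀ x ∈ K, ∀ y ∈ K, x + y ∈ K)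
  (hsmul : ∀ r : ℝ, 0 ≤ r → ∀ x ∈ K, r • x ∈ K)

include hadd hsmul

lemma K_combo {x y : E} (hx : x ∈ K) (hy : y ∈ K) {p q : ℝ} (hp : 0 ≤ p) (hq : 0 ≤ q)
    (hpq : p + q = 1) : p • x + q • y ∈ K :=
  hadd _ (hsmul p hp x hx) _ (hsmul q hq y hy)

lemma span_minFace_small {v : E} (hv : v ∈ K) {z : E}
    (hz : z ∈ Submodule.span ℝ (minFace K v)) :
    ∃ ε : ℝ, 0 < ε ∧ ∀ δ : ℝ, |δ| ≤ ε → v + δ • z ∈ K := by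
  induction hz using Submodule.span_induction with
  | mem g hg =>
    obtain ⟨ε0, hε0, hsub⟩ := minFace_sub_mem hadd hsmul hv hg
    refine ⟨ε0, hε0, fun δ hδ => ?_⟩
    rcases le_or_gt 0 δ with h0 | h0
    · exact hadd v hv _ (hsmul δ h0 g (minFace_subset hv hg))
    · have hid : v + δ • g = (1 + δ/ε0) • v + (-δ/ε0) • (v - ε0 • g) := by
        have : ε0 ≠ 0 := hε0.ne'
        match_scalars <;> field_simp <;> ring
      rw [hid]
      refine K_combo hadd hsmul hv hsub ?_ ?_ (by ring)
      · have h1 : -ε0 ≤ δ := (abs_le.1 hδ).1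
        have h2 : 0 ≤ 1 + δ / ε0 := by
          have : 0 ≤ (ε0 + δ) / ε0 := div_nonneg (by linarith) hε0.le
          calc (0:ℝ) ≤ (ε0 + δ) / ε0 := this
            _ = 1 + δ / ε0 := by field_simp
        exact h2
      · have : 0 ≤ -δ := by linarith
        positivity
  | zero => exact ⟨1, one_pos, fun δ _ => by simpa using hv⟩
  | add x y hx hy ihx ihy =>
    obtain ⟨ε1, hε1, h1⟩ := ihx
    obtain ⟨ε2, hε2, h2⟩ := ihy
    refine ⟨min ε1 ε2 / 2, by positivity, fun δ hδ => ?_⟩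
    have hid : v + δ • (x + y) = (1/2 : ℝ) • (v + (2*δ) • x) + (1/2 : ℝ) • (v + (2*δ) • y) := by
      match_scalars <;> ring
    rw [hid]
    refine K_combo hadd hsmul (h1 (2*δ) ?_) (h2 (2*δ) ?_) (by norm_num) (by norm_num) (by norm_num)
    · rw [abs_mul, abs_two]
      have := min_le_left ε1 ε2; linarith
    · rw [abs_mul, abs_two]
      have := min_le_right ε1 ε2; linarith
  | smul a x hx ihx =>
    obtain ⟨ε1, hε1, h1⟩ := ihx
    rcases eq_or_ne a 0 with rfl | ha
    · exact ⟨1, one_pos, fun δ _ => by simpa using hv⟩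
    · refine ⟨ε1 / |a|, by positivity, fun δ hδ => ?_⟩
      have : v + δ • a • x = v + (δ * a) • x := by rw [smul_smul]
      rw [this]
      refine h1 (δ * a) ?_
      rw [abs_mul]
      calc |δ| * |a| ≤ ε1 / |a| * |a| := by
            have := abs_pos.2 ha
            exact mul_le_mul_of_nonneg_right hδ (abs_nonneg a)
        _ = ε1 := by field_simp

lemma curve_small {v : E} (hv : v ∈ K) {w1 w2 : E}
    (h1 : w1 ∈ Submodule.span ℝ (minFace K v)) (h2 : w2 ∈ Submodule.span ℝ (minFace K v)) :
    ∃ ε : ℝ, 0 < ε ∧ ∀ δ : ℝ, |δ| ≤ ε → v + δ • w1 + δ^2 • w2 ∈ K := by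
  obtain ⟨ε1, hε1, hh1⟩ := span_minFace_small hadd hsmul hv h1
  obtain ⟨ε2, hε2, hh2⟩ := span_minFace_small hadd hsmul hv h2
  refine ⟨min (ε1/2) (min 1 (ε2/2)), by positivity, fun δ hδ => ?_⟩
  have hδ1 : |2*δ| ≤ ε1 := by
    rw [abs_mul, abs_two]
    have := hδ.trans (min_le_left _ _); linarith [this]
  have hδa : |δ| ≤ 1 := hδ.trans ((min_le_right _ _).trans (min_le_left _ _))
  have hδ2 : |2*δ^2| ≤ ε2 := by
    have h2a : |2*δ^2| = 2 * δ^2 := abs_of_nonneg (by positivity)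
    have hb : |δ| ≤ ε2/2 := hδ.trans ((min_le_right _ _).trans (min_le_right _ _))
    nlinarith [abs_nonneg δ, sq_abs δ]
  have hid : v + δ • w1 + δ^2 • w2
      = (1/2 : ℝ) • (v + (2*δ) • w1) + (1/2 : ℝ) • (v + (2*δ^2) • w2) := by
    match_scalars <;> ring
  rw [hid]
  exact K_combo hadd hsmul (hh1 _ hδ1) (hh2 _ hδ2) (by norm_num) (by norm_num) (by norm_num)

end Faces2
section Faces3

variable {E : Type*} [AddCommGroup E] [Module ℝ E]
variable {K : Set E} (hadd : ∀ x ∈ K, ∀ y ∈ K, x + y ∈ K)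
  (hsmul : ∀ r : ℝ, 0 ≤ r → ∀ x ∈ K, r • x ∈ K)

include hadd hsmul

lemma endpoint_face_lt {v0 w1 w2 : E} (hv0 : v0 ∈ K)
    (hsp : ∀ α : ℝ, v0 + α • w1 + α^2 • w2 ∈ Submodule.span ℝ (minFace K v0))
    (hmw2 : -w2 ∈ K) {a ε : ℝ} (ha : 0 < a) (hε : 0 < ε)
    (hca : v0 + a • w1 + a^2 • w2 ∈ K) (hcε : v0 + (-ε) • w1 + (-ε)^2 • w2 ∈ K)
    (hbeyond : ∀ η : ℝ, 0 < η → ∃ β : ℝ, 0 < β ∧ β ≤ η ∧ v0 + (a+β) • w1 + (a+β)^2 • w2 ∉ K) :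
    Submodule.span ℝ (minFace K (v0 + a • w1 + a^2 • w2)) < Submodule.span ℝ (minFace K v0) := by
  set va := v0 + a • w1 + a^2 • w2 with hva
  set vε := v0 + (-ε) • w1 + (-ε)^2 • w2 with hvε
  have haε : (0:ℝ) < a + ε := by linarith
  set l0 : ℝ := ε / (a + ε) with hl0
  have hl0pos : 0 < l0 := by positivity
  have hl0lt : l0 < 1 := by rw [hl0, div_lt_one haε]; linarith
  -- key identity
  have idv : l0 • va + ((1 - l0) • vε + (a*ε) • (-w2)) = v0 := by
    rw [hva, hvε, hl0]
    match_scalars <;> · field_simp; ring_nf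
  -- λ0 • va is in the minimal face of v0
  have hvaK : va ∈ K := hca
  have hface0 := isFaceOf_minFace (K := K) (v := v0) hv0
  have hmemva : l0 • va ∈ minFace K v0 := by
    refine Set.mem_sInter.2 fun F hF => ?_
    have hz : (1 - l0) • vε + (a*ε) • (-w2) ∈ K :=
      hadd _ (hsmul _ (by linarith) _ hcε) _ (hsmul _ (by positivity) _ hmw2)
    have := hF.1.2 (l0 • va) (hsmul _ hl0pos.le _ hvaK) _ hz (by rw [idv]; exact hF.2)
    exact this.1
  -- span inclusion
  have hle : Submodule.span ℝ (minFace K va) ≤ Submodule.span ℝ (minFace K v0) := by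
    rw [Submodule.span_le]
    intro y hy
    obtain ⟨ε', hε', hsub⟩ := minFace_sub_mem hadd hsmul hvaK hy
    have hyK : y ∈ K := minFace_subset hvaK hy
    have hsplit : l0 • va = l0 • (va - ε' • y) + (l0 * ε') • y := by
      match_scalars <;> ring
    have := hface0.2 (l0 • (va - ε' • y)) (hsmul _ hl0pos.le _ hsub) ((l0 * ε') • y)
      (hsmul (l0 * ε') (by positivity) y hyK) (by rw [← hsplit]; exact hmemva)
    have hmem : (l0 * ε') • y ∈ Submodule.span ℝ (minFace K v0) :=
      Submodule.subset_span this.2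
    have hne : (l0 * ε') ≠ 0 := by positivity
    have : y = (l0 * ε')⁻¹ • ((l0 * ε') • y) := by rw [inv_smul_smul₀ hne]
    rw [this]
    exact SetLike.mem_coe.2 (Submodule.smul_mem _ _ hmem)
  -- strictness
  refine lt_of_le_of_ne hle fun heq => ?_
  have hv0span : v0 ∈ Submodule.span ℝ (minFace K v0) := by
    have h0 := hsp 0
    simpa using h0
  have hABspan := fun α => hsp α
  have hw2span : w2 ∈ Submodule.span ℝ (minFace K v0) := by
    have hA := hsp 1
    have hB := hsp (-1)
    have hid : w2 = (1/2 : ℝ) • (v0 + (1:ℝ) • w1 + (1:ℝ)^2 • w2)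
        + (1/2 : ℝ) • (v0 + (-1:ℝ) • w1 + (-1:ℝ)^2 • w2) - v0 := by
      match_scalars <;> ring
    rw [hid]
    exact Submodule.sub_mem _ (Submodule.add_mem _ (Submodule.smul_mem _ _ hA)
      (Submodule.smul_mem _ _ hB)) hv0span
  have hw1span : w1 ∈ Submodule.span ℝ (minFace K v0) := by
    have hA := hsp 1
    have hB := hsp (-1)
    have hid : w1 = (1/2 : ℝ) • (v0 + (1:ℝ) • w1 + (1:ℝ)^2 • w2)
        - (1/2 : ℝ) • (v0 + (-1:ℝ) • w1 + (-1:ℝ)^2 • w2) := by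
      match_scalars <;> ring
    rw [hid]
    exact Submodule.sub_mem _ (Submodule.smul_mem _ _ hA) (Submodule.smul_mem _ _ hB)
  -- move the data into span of minFace va
  have hw1' : w1 + (2*a) • w2 ∈ Submodule.span ℝ (minFace K va) := by
    rw [heq]
    exact Submodule.add_mem _ hw1span (Submodule.smul_mem _ _ hw2span)
  have hw2' : w2 ∈ Submodule.span ℝ (minFace K va) := by rw [heq]; exact hw2span
  obtain ⟨ε'', hε'', hsmall⟩ := curve_small hadd hsmul hvaK hw1' hw2'
  obtain ⟨β, hβ0, hβε, hnot⟩ := hbeyond ε'' hε''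
  apply hnot
  have hid2 : v0 + (a+β) • w1 + (a+β)^2 • w2 = va + β • (w1 + (2*a) • w2) + β^2 • w2 := by
    rw [hva]; match_scalars <;> ring
  rw [hid2]
  exact hsmall β (by rw [abs_of_pos hβ0]; exact hβε)

end Faces3
section Alg

variable {n m : ℕ} (A0 : Matrix (Fin n) (Fin n) ℝ) (b0 : Fin n → ℝ) (c0 : ℝ)
  (A : Fin m → Matrix (Fin n) (Fin n) ℝ) (b : Fin m → Fin n → ℝ) (c : Fin m → ℝ)

/-- `q(x) - 2t e₀`. -/
def qv (x : Fin n → ℝ) (t : ℝ) : ℝ × (Fin m → ℝ) :=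
  qVec A0 b0 c0 A b c x - (2*t) • e0

lemma ipr_add_left {m : ℕ} (u v w : ℝ × (Fin m → ℝ)) : ipr (u+v) w = ipr u w + ipr v w := by
  simp [ipr, add_dotProduct]; ring

lemma ipr_smul_left {m : ℕ} (r : ℝ) (u w : ℝ × (Fin m → ℝ)) : ipr (r • u) w = r * ipr u w := by
  simp [ipr, smul_dotProduct]; ring

lemma ipr_zero_left {m : ℕ} (w : ℝ × (Fin m → ℝ)) : ipr 0 w = 0 := by
  simp [ipr]

lemma polar_add {m : ℕ} {S : Set (ℝ × (Fin m → ℝ))} :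
    ∀ x ∈ polarCone S, ∀ y ∈ polarCone S, x + y ∈ polarCone S := by
  intro x hx y hy w hw
  rw [ipr_add_left]
  exact add_nonpos (hx w hw) (hy w hw)

lemma polar_smul {m : ℕ} {S : Set (ℝ × (Fin m → ℝ))} :
    ∀ r : ℝ, 0 ≤ r → ∀ x ∈ polarCone S, r • x ∈ polarCone S := by
  intro r hr x hx w hw
  rw [ipr_smul_left]
  exact mul_nonpos_of_nonneg_of_nonpos hr (hx w hw)

lemma sum_mulVec' {k n : ℕ} (M : Fin k → Matrix (Fin n) (Fin n) ℝ) (y : Fin n → ℝ) :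
    (∑ i, M i).mulVec y = ∑ i, (M i).mulVec y := by
  funext j
  simp [Matrix.mulVec, dotProduct, Matrix.sum_apply, Finset.sum_apply, Finset.sum_mul]
  rw [Finset.sum_comm]

lemma sumQ (g0 : ℝ) (g : Fin m → ℝ) (y : Fin n → ℝ) :
    y ⬝ᵥ (Amix A0 A g0 g).mulVec y
      = g0 * (y ⬝ᵥ A0.mulVec y) + ∑ i, g i * (y ⬝ᵥ (A i).mulVec y) := by
  have hsum : ∀ w : Fin m → (Fin n → ℝ), y ⬝ᵥ (∑ i, w i) = ∑ i, y ⬝ᵥ w i := by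
    intro w
    simp only [dotProduct, Finset.sum_apply, Finset.mul_sum]
    rw [Finset.sum_comm]
  rw [Amix, Matrix.add_mulVec, dotProduct_add, Matrix.smul_mulVec, dotProduct_smul,
    sum_mulVec', hsum]
  simp only [smul_eq_mul, Matrix.smul_mulVec, dotProduct_smul]

lemma quadF_add_smul (M : Matrix (Fin n) (Fin n) ℝ) (bb : Fin n → ℝ) (cc : ℝ)
    (x y : Fin n → ℝ) (α : ℝ) :
    quadF M bb cc (x + α • y)
      = quadF M bb cc x + α * (x ⬝ᵥ M.mulVec y + y ⬝ᵥ M.mulVec x + 2 * (bb ⬝ᵥ y))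
        + α^2 * (y ⬝ᵥ M.mulVec y) := by
  simp [quadF, Matrix.mulVec_add, Matrix.mulVec_smul, dotProduct_add, add_dotProduct,
    dotProduct_smul, smul_dotProduct, smul_eq_mul]
  ring

end Alg
section Alg2

variable {n m : ℕ} (A0 : Matrix (Fin n) (Fin n) ℝ) (b0 : Fin n → ℝ) (c0 : ℝ)
  (A : Fin m → Matrix (Fin n) (Fin n) ℝ) (b : Fin m → Fin n → ℝ) (c : Fin m → ℝ)

/-- Linear coefficient of the curve `α ↦ q(x+α dx) - 2(t+α dt)e₀`. -/
def wOne (x dx : Fin n → ℝ) (dt : ℝ) : ℝ × (Fin m → ℝ) :=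
  (x ⬝ᵥ A0.mulVec dx + dx ⬝ᵥ A0.mulVec x + 2*(b0 ⬝ᵥ dx) - 2*dt,
   fun i => x ⬝ᵥ (A i).mulVec dx + dx ⬝ᵥ (A i).mulVec x + 2*(b i ⬝ᵥ dx))

/-- Quadratic coefficient of that curve. -/
def wTwo (dx : Fin n → ℝ) : ℝ × (Fin m → ℝ) :=
  (dx ⬝ᵥ A0.mulVec dx, fun i => dx ⬝ᵥ (A i).mulVec dx)

lemma qv_curve (x dx : Fin n → ℝ) (t dt α : ℝ) :
    qv A0 b0 c0 A b c (x + α • dx) (t + α * dt)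
      = qv A0 b0 c0 A b c x t + α • wOne A0 b0 A b x dx dt + α^2 • wTwo A0 A dx := by
  unfold qv qVec e0 wOne wTwo
  refine Prod.ext ?_ ?_
  · simp only [Prod.fst_sub, Prod.fst_add, Prod.smul_fst, smul_eq_mul, mul_one]
    rw [quadF_add_smul]
    ring
  · funext i
    simp only [Prod.snd_sub, Prod.snd_add, Prod.smul_snd, Pi.sub_apply, Pi.add_apply,
      Pi.smul_apply, smul_eq_mul, smul_zero, mul_zero]
    rw [quadF_add_smul]
    ring

lemma ipr_qv (x : Fin n → ℝ) (t : ℝ) (g : ℝ × (Fin m → ℝ)) :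
    ipr (qv A0 b0 c0 A b c x t) g
      = g.1 * quadF A0 b0 c0 x + (∑ i, g.2 i * quadF (A i) (b i) (c i) x) - 2*t*g.1 := by
  unfold ipr qv qVec e0
  simp only [Prod.fst_sub, Prod.snd_sub, Prod.smul_fst, Prod.smul_snd, smul_eq_mul, mul_one,
    smul_zero]
  rw [show ((fun i => quadF (A i) (b i) (c i) x) - (0 : Fin m → ℝ)) = fun i => quadF (A i) (b i) (c i) x by simp]
  rw [dotProduct]
  rw [Finset.sum_congr rfl (fun i _ => mul_comm (quadF (A i) (b i) (c i) x) (g.2 i))]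
  ring

lemma dot_comm' {m : ℕ} (u v : Fin m → ℝ) : u ⬝ᵥ v = ∑ i, v i * u i := by
  rw [dotProduct]; exact Finset.sum_congr rfl fun i _ => mul_comm _ _

lemma ipr_wTwo (dx : Fin n → ℝ) (g : ℝ × (Fin m → ℝ)) :
    ipr (wTwo A0 A dx) g
      = g.1 * (dx ⬝ᵥ A0.mulVec dx) + ∑ i, g.2 i * (dx ⬝ᵥ (A i).mulVec dx) := by
  have h0 : ipr (wTwo A0 A dx) g
      = (dx ⬝ᵥ A0.mulVec dx) * g.1 + (fun i => dx ⬝ᵥ (A i).mulVec dx) ⬝ᵥ g.2 := rfl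
  rw [h0, dot_comm' (fun i => dx ⬝ᵥ (A i).mulVec dx) g.2]
  ring

lemma ipr_wTwo_eq_quad (dx : Fin n → ℝ) (g : ℝ × (Fin m → ℝ)) :
    ipr (wTwo A0 A dx) g = dx ⬝ᵥ (Amix A0 A g.1 g.2).mulVec dx := by
  rw [ipr_wTwo, sumQ]

lemma ipr_wTwo_nonneg {g : ℝ × (Fin m → ℝ)} (hg : g ∈ Gamma A0 A) (dx : Fin n → ℝ) :
    0 ≤ ipr (wTwo A0 A dx) g := by
  rw [ipr_wTwo_eq_quad]
  simpa using hg.2.2.dotProduct_mulVec_nonneg dx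

lemma ipr_curve (x dx : Fin n → ℝ) (t dt α : ℝ) (g : ℝ × (Fin m → ℝ)) :
    ipr (qv A0 b0 c0 A b c (x + α • dx) (t + α * dt)) g
      = ipr (qv A0 b0 c0 A b c x t) g + α * ipr (wOne A0 b0 A b x dx dt) g
        + α^2 * ipr (wTwo A0 A dx) g := by
  rw [qv_curve, ipr_add_left, ipr_add_left, ipr_smul_left, ipr_smul_left]

lemma wOne_zero (x : Fin n → ℝ) (dt : ℝ) :
    wOne A0 b0 A b x 0 dt = ((-(2*dt) : ℝ), (0 : Fin m → ℝ)) := by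
  unfold wOne
  refine Prod.ext ?_ ?_
  · simp
  · funext i; simp

lemma ipr_wOne_zero (x : Fin n → ℝ) (dt : ℝ) (g : ℝ × (Fin m → ℝ)) :
    ipr (wOne A0 b0 A b x 0 dt) g = -(2*dt) * g.1 := by
  rw [wOne_zero]
  simp [ipr]

lemma quadF_combo (M : Matrix (Fin n) (Fin n) ℝ) (bb : Fin n → ℝ) (cc : ℝ)
    (x y : Fin n → ℝ) (a : ℝ) :
    quadF M bb cc (a•x + (1-a)•y)
      = a * quadF M bb cc x + (1-a) * quadF M bb cc y
        - (a*(1-a)) * ((x-y) ⬝ᵥ M.mulVec (x-y)) := by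
  simp only [quadF, Matrix.mulVec_add, Matrix.mulVec_smul, Matrix.mulVec_sub, dotProduct_add,
    add_dotProduct, dotProduct_sub, sub_dotProduct, dotProduct_smul, smul_dotProduct,
    smul_eq_mul]
  ring

lemma ipr_qv_combo (x y : Fin n → ℝ) (t s a : ℝ) (g : ℝ × (Fin m → ℝ)) :
    ipr (qv A0 b0 c0 A b c (a•x + (1-a)•y) (a*t + (1-a)*s)) g
      = a * ipr (qv A0 b0 c0 A b c x t) g + (1-a) * ipr (qv A0 b0 c0 A b c y s) g
        - (a*(1-a)) * ipr (wTwo A0 A (x-y)) g := by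
  rw [ipr_qv, ipr_qv, ipr_qv, ipr_wTwo, quadF_combo]
  have hsum : (∑ i, g.2 i * quadF (A i) (b i) (c i) (a•x + (1-a)•y))
      = (∑ i, (a * (g.2 i * quadF (A i) (b i) (c i) x)
          + (1-a) * (g.2 i * quadF (A i) (b i) (c i) y)
          + (-(a*(1-a))) * (g.2 i * ((x-y) ⬝ᵥ (A i).mulVec (x-y))))) :=
    Finset.sum_congr rfl fun i _ => by rw [quadF_combo]; ring
  rw [hsum, Finset.sum_add_distrib, Finset.sum_add_distrib, ← Finset.mul_sum, ← Finset.mul_sum,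
    ← Finset.mul_sum]
  ring

end Alg2
section Main1

variable {n m : ℕ} (A0 : Matrix (Fin n) (Fin n) ℝ) (b0 : Fin n → ℝ) (c0 : ℝ)
  (A : Fin m → Matrix (Fin n) (Fin n) ℝ) (b : Fin m → Fin n → ℝ) (c : Fin m → ℝ)

lemma Sepi_sub_SSDP : Sepi A0 b0 c0 A b c ⊆ SSDP A0 b0 c0 A b c := by
  rintro ⟨x, t⟩ ⟨h0, hi⟩ g hg
  show ipr (qv A0 b0 c0 A b c x t) g ≤ 0
  rw [ipr_qv]
  have h1 : g.1 * quadF A0 b0 c0 x - 2*t*g.1 = g.1 * (quadF A0 b0 c0 x - 2*t) := by ring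
  have hsum : (∑ i, g.2 i * quadF (A i) (b i) (c i) x) ≤ 0 :=
    Finset.sum_nonpos fun i _ => mul_nonpos_of_nonneg_of_nonpos (hg.2.1 i) (hi i)
  have := mul_nonpos_of_nonneg_of_nonpos hg.1 (by linarith : quadF A0 b0 c0 x - 2*t ≤ 0)
  linarith

lemma convex_SSDP : Convex ℝ (SSDP A0 b0 c0 A b c) := by
  intro p hp q hq a b' ha hb' hab
  obtain rfl : b' = 1 - a := by linarith
  intro g hg
  show ipr (qv A0 b0 c0 A b c (a•p.1 + (1-a)•q.1) (a*p.2 + (1-a)*q.2)) g ≤ 0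
  rw [ipr_qv_combo]
  have h1 : ipr (qv A0 b0 c0 A b c p.1 p.2) g ≤ 0 := hp g hg
  have h2 : ipr (qv A0 b0 c0 A b c q.1 q.2) g ≤ 0 := hq g hg
  have h3 := ipr_wTwo_nonneg A0 A hg (p.1 - q.1)
  nlinarith [mul_nonpos_of_nonneg_of_nonpos ha h1, mul_nonpos_of_nonneg_of_nonpos hb' h2,
    mul_nonneg (mul_nonneg ha hb') h3]

open Pointwise in
lemma up_closed {p : (Fin n → ℝ) × ℝ} (hp : p ∈ convexHull ℝ (Sepi A0 b0 c0 A b c)) {s : ℝ}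
    (hs : 0 ≤ s) : (p.1, p.2 + s) ∈ convexHull ℝ (Sepi A0 b0 c0 A b c) := by
  have hmem : p + ((0 : Fin n → ℝ), s)
      ∈ convexHull ℝ (Sepi A0 b0 c0 A b c) + convexHull ℝ {((0 : Fin n → ℝ), s)} := by
    exact Set.add_mem_add hp (by rw [convexHull_singleton]; exact rfl)
  rw [← convexHull_add] at hmem
  have hsub : Sepi A0 b0 c0 A b c + {((0 : Fin n → ℝ), s)} ⊆ Sepi A0 b0 c0 A b c := by
    rintro r ⟨u, hu, v, hv, rfl⟩
    rcases hv with rfl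
    refine ⟨?_, ?_⟩
    · show quadF A0 b0 c0 (u.1 + 0) ≤ 2 * (u.2 + s)
      rw [add_zero]
      have := hu.1
      linarith
    · intro i
      show quadF (A i) (b i) (c i) (u.1 + 0) ≤ 0
      rw [add_zero]
      exact hu.2 i
  have hfinal : p + ((0 : Fin n → ℝ), s) ∈ convexHull ℝ (Sepi A0 b0 c0 A b c) := by
    have h2 : convexHull ℝ (Sepi A0 b0 c0 A b c + {((0 : Fin n → ℝ), s)})
        ⊆ convexHull ℝ (Sepi A0 b0 c0 A b c) :=
      convexHull_min (hsub.trans (subset_convexHull ℝ _)) (convex_convexHull ℝ _)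
    exact h2 hmem
  have heq : p + ((0 : Fin n → ℝ), s) = (p.1, p.2 + s) := Prod.ext (add_zero p.1) rfl
  rw [← heq]
  exact hfinal

/-- quadratic nonpositive on `[0, ∞)` forces `Q = 0` (if `Q ≥ 0`) and `B ≤ 0`. -/
lemma quad_nonpos_unb {C B Q : ℝ} (hQ : 0 ≤ Q)
    (h : ∀ α : ℝ, 0 ≤ α → C + B*α + Q*α^2 ≤ 0) : Q = 0 ∧ B ≤ 0 := by
  have hQ0 : Q = 0 := by
    by_contra hne
    have hQpos : 0 < Q := lt_of_le_of_ne hQ (Ne.symm hne)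
    set α := (|B| + |C| + 1 + Q)/Q with hα
    have hα1 : 1 ≤ α := by
      rw [hα, le_div_iff₀ hQpos]
      have := abs_nonneg B; have := abs_nonneg C
      linarith
    have hα0 : 0 ≤ α := by linarith
    have hQα : Q * α = |B| + |C| + 1 + Q := by
      rw [hα]; field_simp
    have hQα2 : Q * α^2 = (|B| + |C| + 1 + Q) * α := by
      rw [sq, ← mul_assoc, hQα]
    have h1 := h α hα0
    rw [hQα2] at h1
    nlinarith [mul_nonneg (show (0:ℝ) ≤ B + |B| by linarith [neg_abs_le B]) hα0,
      mul_le_mul_of_nonneg_left hα1 (show (0:ℝ) ≤ |C| + 1 + Q by positivity),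
      neg_abs_le C]
  refine ⟨hQ0, ?_⟩
  by_contra hB
  push_neg at hB
  have hαpos : 0 ≤ (|C| + 1)/B := by positivity
  have h1 := h ((|C| + 1)/B) hαpos
  rw [hQ0] at h1
  have : B * ((|C| + 1)/B) = |C| + 1 := by field_simp
  nlinarith [neg_abs_le C]

end Main1
section CoeffsMem

variable {E : Type*} [AddCommGroup E] [Module ℝ E]

lemma curve_coeffs_mem {p : Submodule ℝ E} {v0 w1 w2 : E}
    (hsp : ∀ α : ℝ, v0 + α • w1 + α^2 • w2 ∈ p) : w1 ∈ p ∧ w2 ∈ p := by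
  have h0 : v0 ∈ p := by have := hsp 0; norm_num at this; exact this
  have hA := hsp 1
  have hB := hsp (-1)
  constructor
  · have hid : w1 = (1/2 : ℝ) • (v0 + (1:ℝ) • w1 + (1:ℝ)^2 • w2)
        - (1/2 : ℝ) • (v0 + (-1:ℝ) • w1 + (-1:ℝ)^2 • w2) := by
      match_scalars <;> ring
    rw [hid]
    exact Submodule.sub_mem _ (Submodule.smul_mem _ _ hA) (Submodule.smul_mem _ _ hB)
  · have hid : w2 = (1/2 : ℝ) • (v0 + (1:ℝ) • w1 + (1:ℝ)^2 • w2)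
        + (1/2 : ℝ) • (v0 + (-1:ℝ) • w1 + (-1:ℝ)^2 • w2) - v0 := by
      match_scalars <;> ring
    rw [hid]
    exact Submodule.sub_mem _ (Submodule.add_mem _ (Submodule.smul_mem _ _ hA)
      (Submodule.smul_mem _ _ hB)) h0

end CoeffsMem

section Main2

variable {n m : ℕ} (A0 : Matrix (Fin n) (Fin n) ℝ) (b0 : Fin n → ℝ) (c0 : ℝ)
  (A : Fin m → Matrix (Fin n) (Fin n) ℝ) (b : Fin m → Fin n → ℝ) (c : Fin m → ℝ)

lemma ipr_neg_left {m : ℕ} (u w : ℝ × (Fin m → ℝ)) : ipr (-u) w = -ipr u w := by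
  simp [ipr, neg_dotProduct]; ring

/-- Convexity of the feasible parameter set along a line. -/
lemma Icvx {x dx : Fin n → ℝ} {t dt : ℝ} {α β θ : ℝ}
    (hα : qv A0 b0 c0 A b c (x + α • dx) (t + α * dt) ∈ polarCone (Gamma A0 A))
    (hβ : qv A0 b0 c0 A b c (x + β • dx) (t + β * dt) ∈ polarCone (Gamma A0 A))
    (hθ0 : 0 ≤ θ) (hθ1 : θ ≤ 1) :
    qv A0 b0 c0 A b c (x + (θ*α + (1-θ)*β) • dx) (t + (θ*α + (1-θ)*β) * dt)
      ∈ polarCone (Gamma A0 A) := by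
  intro g hg
  have hαg := hα g hg
  have hβg := hβ g hg
  rw [show (ipr (qv A0 b0 c0 A b c (x + α • dx) (t + α * dt)) g) = _ from
    ipr_curve A0 b0 c0 A b c x dx t dt α g] at hαg
  rw [show (ipr (qv A0 b0 c0 A b c (x + β • dx) (t + β * dt)) g) = _ from
    ipr_curve A0 b0 c0 A b c x dx t dt β g] at hβg
  show ipr (qv A0 b0 c0 A b c (x + (θ*α + (1-θ)*β) • dx) (t + (θ*α + (1-θ)*β) * dt)) g ≤ 0
  rw [ipr_curve]
  have hQ := ipr_wTwo_nonneg A0 A hg dx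
  nlinarith [mul_nonpos_of_nonneg_of_nonpos hθ0 hαg,
    mul_nonpos_of_nonneg_of_nonpos (by linarith : (0:ℝ) ≤ 1 - θ) hβg,
    mul_nonneg (mul_nonneg (mul_nonneg hθ0 (by linarith : (0:ℝ) ≤ 1 - θ)) hQ)
      (sq_nonneg (α - β))]

/-- Closedness of the feasible parameter set: the supremum is feasible. -/
lemma sup_mem {x dx : Fin n → ℝ} {t dt : ℝ} {a : ℝ} (ha : 0 < a)
    (hmem : ∀ α : ℝ, 0 ≤ α → α < a →
      qv A0 b0 c0 A b c (x + α • dx) (t + α * dt) ∈ polarCone (Gamma A0 A)) :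
    qv A0 b0 c0 A b c (x + a • dx) (t + a * dt) ∈ polarCone (Gamma A0 A) := by
  intro g hg
  set F : ℝ → ℝ := fun α => ipr (qv A0 b0 c0 A b c x t) g
    + α * ipr (wOne A0 b0 A b x dx dt) g + α^2 * ipr (wTwo A0 A dx) g with hF
  have hcont : Continuous F := by fun_prop
  have htd : Filter.Tendsto F (nhdsWithin a (Set.Iio a)) (nhds (F a)) :=
    (hcont.tendsto a).mono_left nhdsWithin_le_nhds
  have hev : ∀ᶠ α in nhdsWithin a (Set.Iio a), F α ≤ 0 := by
    filter_upwards [Ioo_mem_nhdsLT_of_mem (⟨ha, le_refl a⟩ : a ∈ Set.Ioc 0 a)] with α hα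
    have := hmem α hα.1.le hα.2 g hg
    rw [show (ipr (qv A0 b0 c0 A b c (x + α • dx) (t + α * dt)) g) = F α from
      ipr_curve A0 b0 c0 A b c x dx t dt α g] at this
    exact this
  have hFa : F a ≤ 0 := le_of_tendsto htd hev
  show ipr (qv A0 b0 c0 A b c (x + a • dx) (t + a * dt)) g ≤ 0
  rw [ipr_curve]
  exact hFa

/-- If the feasible set along a direction is unbounded above, the direction is vertical. -/
lemma unbounded_dir (hdef : ∃ g ∈ Gamma1 A0 A, (Amix A0 A 1 g).PosDef)
    {x dx : Fin n → ℝ} {t dt : ℝ}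
    (hx : qv A0 b0 c0 A b c x t ∈ polarCone (Gamma A0 A))
    (hub : ¬ BddAbove {α : ℝ |
      qv A0 b0 c0 A b c (x + α • dx) (t + α * dt) ∈ polarCone (Gamma A0 A)}) :
    dx = 0 ∧ 0 ≤ dt := by
  obtain ⟨gs, hgs, hPD⟩ := hdef
  have hγ : ((1 : ℝ), gs) ∈ Gamma A0 A := ⟨zero_le_one, hgs.1, hgs.2⟩
  have h0I : qv A0 b0 c0 A b c (x + (0:ℝ) • dx) (t + 0 * dt) ∈ polarCone (Gamma A0 A) := by
    simpa using hx
  have hIall : ∀ α : ℝ, 0 ≤ α →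
      qv A0 b0 c0 A b c (x + α • dx) (t + α * dt) ∈ polarCone (Gamma A0 A) := by
    intro α hα
    obtain ⟨β, hβI, hβ⟩ := not_bddAbove_iff.1 hub α
    have hβpos : 0 < β := lt_of_le_of_lt hα hβ
    have hcomb := Icvx A0 b0 c0 A b c hβI h0I (θ := α/β)
      (div_nonneg hα hβpos.le) ((div_le_one hβpos).2 hβ.le)
    have hval : α/β*β + (1-α/β)*0 = α := by field_simp; ring
    rwa [hval] at hcomb
  have hquad : ∀ α : ℝ, 0 ≤ α →
      ipr (qv A0 b0 c0 A b c x t) ((1 : ℝ), gs)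
      + ipr (wOne A0 b0 A b x dx dt) ((1 : ℝ), gs) * α
      + ipr (wTwo A0 A dx) ((1 : ℝ), gs) * α^2 ≤ 0 := by
    intro α hα
    have := hIall α hα _ hγ
    rw [show (ipr (qv A0 b0 c0 A b c (x + α • dx) (t + α * dt)) ((1:ℝ), gs)) = _ from
      ipr_curve A0 b0 c0 A b c x dx t dt α ((1:ℝ), gs)] at this
    linarith [this]
  obtain ⟨hQ0, hB⟩ := quad_nonpos_unb (ipr_wTwo_nonneg A0 A hγ dx) hquad
  have hdx : dx = 0 := by
    by_contra hne
    have hpos := hPD.dotProduct_mulVec_pos hne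
    rw [ipr_wTwo_eq_quad] at hQ0
    have hQ0' : dx ⬝ᵥ (Amix A0 A 1 gs).mulVec dx = 0 := hQ0
    simp only [star_trivial] at hpos
    rw [hQ0'] at hpos
    exact lt_irrefl _ hpos
  refine ⟨hdx, ?_⟩
  rw [hdx, ipr_wOne_zero] at hB
  simp at hB
  linarith

end Main2
section Main3

variable {n m : ℕ} (A0 : Matrix (Fin n) (Fin n) ℝ) (b0 : Fin n → ℝ) (c0 : ℝ)
  (A : Fin m → Matrix (Fin n) (Fin n) ℝ) (b : Fin m → Fin n → ℝ) (c : Fin m → ℝ)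

open Module

/-- Going along a rounding direction until the boundary strictly drops the face rank. -/
lemma half_line {x dx : Fin n → ℝ} {t dt : ℝ}
    (hx : qv A0 b0 c0 A b c x t ∈ polarCone (Gamma A0 A))
    (hd : ∀ α : ℝ, qv A0 b0 c0 A b c (x + α • dx) (t + α * dt)
      ∈ Submodule.span ℝ (minFace (polarCone (Gamma A0 A)) (qv A0 b0 c0 A b c x t)))
    (hbdd : BddAbove {α : ℝ |
      qv A0 b0 c0 A b c (x + α • dx) (t + α * dt) ∈ polarCone (Gamma A0 A)}) :
    ∃ a : ℝ, 0 < a ∧ qv A0 b0 c0 A b c (x + a • dx) (t + a * dt) ∈ polarCone (Gamma A0 A) ∧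
      finrank ℝ (Submodule.span ℝ (minFace (polarCone (Gamma A0 A))
          (qv A0 b0 c0 A b c (x + a • dx) (t + a * dt))))
        < finrank ℝ (Submodule.span ℝ (minFace (polarCone (Gamma A0 A))
          (qv A0 b0 c0 A b c x t))) := by
  set K := polarCone (Gamma A0 A) with hK
  set I := {α : ℝ | qv A0 b0 c0 A b c (x + α • dx) (t + α * dt) ∈ K} with hI
  have hcurve : ∀ α : ℝ, qv A0 b0 c0 A b c x t + α • wOne A0 b0 A b x dx dt
      + α^2 • wTwo A0 A dx ∈ Submodule.span ℝ (minFace K (qv A0 b0 c0 A b c x t)) := by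
    intro α; rw [← qv_curve]; exact hd α
  obtain ⟨hW1, hW2⟩ := curve_coeffs_mem hcurve
  obtain ⟨ε0, hε0, hsmall⟩ := curve_small polar_add polar_smul hx hW1 hW2
  have hI0 : ∀ α : ℝ, |α| ≤ ε0 → α ∈ I := by
    intro α hα
    show qv A0 b0 c0 A b c (x + α • dx) (t + α * dt) ∈ K
    rw [qv_curve]; exact hsmall α hα
  have h0I : (0:ℝ) ∈ I := hI0 0 (by simpa using hε0.le)
  set a := sSup I with ha
  have hεa : ε0 ≤ a := le_csSup hbdd (hI0 ε0 (by rw [abs_of_pos hε0]))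
  have hapos : 0 < a := lt_of_lt_of_le hε0 hεa
  have haI : qv A0 b0 c0 A b c (x + a • dx) (t + a * dt) ∈ K := by
    refine sup_mem A0 b0 c0 A b c hapos ?_
    intro α hα0 hαa
    rcases le_or_gt α ε0 with hle | hgt
    · exact hI0 α (by rw [abs_of_nonneg hα0]; exact hle)
    · obtain ⟨β, hβI, hβ⟩ := exists_lt_of_lt_csSup ⟨0, h0I⟩ hαa
      have hβpos : 0 < β := lt_trans (lt_trans hε0 hgt) hβ
      have hcomb := Icvx A0 b0 c0 A b c hβI (hI0 0 (by simpa using hε0.le)) (θ := α/β)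
        (div_nonneg hα0 hβpos.le) ((div_le_one hβpos).2 hβ.le)
      have hval : α/β*β + (1-α/β)*0 = α := by field_simp; ring
      rwa [hval] at hcomb
  have hmW2 : -(wTwo A0 A dx) ∈ K := by
    intro g hg
    rw [ipr_neg_left]
    linarith [ipr_wTwo_nonneg A0 A hg dx]
  have hca : qv A0 b0 c0 A b c x t + a • wOne A0 b0 A b x dx dt
      + a^2 • wTwo A0 A dx ∈ K := by rw [← qv_curve]; exact haI
  have hcε : qv A0 b0 c0 A b c x t + (-ε0) • wOne A0 b0 A b x dx dt
      + (-ε0)^2 • wTwo A0 A dx ∈ K := by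
    have : qv A0 b0 c0 A b c (x + (-ε0) • dx) (t + (-ε0) * dt) ∈ K :=
      hI0 (-ε0) (by rw [abs_neg, abs_of_pos hε0])
    rw [qv_curve] at this; exact this
  have hbeyond : ∀ η : ℝ, 0 < η → ∃ β : ℝ, 0 < β ∧ β ≤ η ∧
      qv A0 b0 c0 A b c x t + (a+β) • wOne A0 b0 A b x dx dt
        + (a+β)^2 • wTwo A0 A dx ∉ K := by
    intro η hη
    refine ⟨η, hη, le_rfl, fun hmem => ?_⟩
    rw [← qv_curve] at hmem
    have : a + η ∈ I := hmem
    have := le_csSup hbdd this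
    linarith
  have hlt := endpoint_face_lt polar_add polar_smul hx hcurve hmW2 hapos hε0 hca hcε hbeyond
  rw [← qv_curve] at hlt
  exact ⟨a, hapos, haI, Submodule.finrank_lt_finrank_of_lt hlt⟩

end Main3
section Main4

variable {n m : ℕ} (A0 : Matrix (Fin n) (Fin n) ℝ) (b0 : Fin n → ℝ) (c0 : ℝ)
  (A : Fin m → Matrix (Fin n) (Fin n) ℝ) (b : Fin m → Fin n → ℝ) (c : Fin m → ℝ)

open Module

lemma main_ind (hdef : ∃ g ∈ Gamma1 A0 A, (Amix A0 A 1 g).PosDef)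
    (h : ∀ p ∈ SSDP A0 b0 c0 A b c \ Sepi A0 b0 c0 A b c,
      ∀ G : Set (ℝ × (Fin m → ℝ)),
        IsMinFace (polarCone (Gamma A0 A))
          (qVec A0 b0 c0 A b c p.1 - (2 * p.2) • e0) G →
        ∃ d ∈ Rset' A0 b0 c0 A b c p.1 p.2 G, d ≠ 0) :
    ∀ k : ℕ, ∀ x : Fin n → ℝ, ∀ t : ℝ,
      qv A0 b0 c0 A b c x t ∈ polarCone (Gamma A0 A) →
      finrank ℝ (Submodule.span ℝ
        (minFace (polarCone (Gamma A0 A)) (qv A0 b0 c0 A b c x t))) ≤ k →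
      (x, t) ∈ convexHull ℝ (Sepi A0 b0 c0 A b c) := by
  intro k
  induction k using Nat.strong_induction_on with
  | _ k IH =>
  intro x t hx hrank
  by_cases hS : (x, t) ∈ Sepi A0 b0 c0 A b c
  · exact subset_convexHull ℝ _ hS
  obtain ⟨d, hd, hdne⟩ := h (x, t) ⟨hx, hS⟩
    (minFace (polarCone (Gamma A0 A)) (qv A0 b0 c0 A b c x t))
    (isMinFace_minFace hx)
  have hd1 : ∀ α : ℝ, qv A0 b0 c0 A b c (x + α • d.1) (t + α * d.2)
      ∈ Submodule.span ℝ (minFace (polarCone (Gamma A0 A)) (qv A0 b0 c0 A b c x t)) :=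
    fun α => hd α
  have hd2 : ∀ α : ℝ, qv A0 b0 c0 A b c (x + α • (-d.1)) (t + α * (-d.2))
      ∈ Submodule.span ℝ (minFace (polarCone (Gamma A0 A)) (qv A0 b0 c0 A b c x t)) := by
    intro α
    have h1 := hd1 (-α)
    have e1 : x + α • (-d.1) = x + (-α) • d.1 := by rw [smul_neg, ← neg_smul]
    have e2 : t + α * (-d.2) = t + (-α) * d.2 := by ring
    rw [e1, e2]; exact h1
  have hdne' : d.1 = 0 → d.2 = 0 → False := by
    intro h1 h2
    exact hdne (Prod.ext h1 h2)
  by_cases hbdd1 : BddAbove {α : ℝ |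
      qv A0 b0 c0 A b c (x + α • d.1) (t + α * d.2) ∈ polarCone (Gamma A0 A)}
  · by_cases hbdd2 : BddAbove {α : ℝ |
        qv A0 b0 c0 A b c (x + α • (-d.1)) (t + α * (-d.2)) ∈ polarCone (Gamma A0 A)}
    · -- both directions bounded: convex combination of the two endpoints
      obtain ⟨a1, ha1, hm1, hr1⟩ := half_line A0 b0 c0 A b c hx hd1 hbdd1
      obtain ⟨a2, ha2, hm2, hr2⟩ := half_line A0 b0 c0 A b c hx hd2 hbdd2
      have hp1 : (x + a1 • d.1, t + a1 * d.2) ∈ convexHull ℝ (Sepi A0 b0 c0 A b c) :=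
        IH _ (lt_of_lt_of_le hr1 hrank) _ _ hm1 le_rfl
      have hp2 : (x + a2 • (-d.1), t + a2 * (-d.2)) ∈ convexHull ℝ (Sepi A0 b0 c0 A b c) :=
        IH _ (lt_of_lt_of_le hr2 hrank) _ _ hm2 le_rfl
      set θ := a1 / (a1 + a2) with hθ
      have hsum : 0 < a1 + a2 := by linarith
      have hθ0 : 0 ≤ θ := by positivity
      have hθ1 : θ ≤ 1 := by rw [hθ, div_le_one hsum]; linarith
      have hcomb := (convex_convexHull ℝ (Sepi A0 b0 c0 A b c)) hp2 hp1 hθ0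
        (by linarith : 0 ≤ 1 - θ) (by ring)
      have heq : θ • ((x + a2 • (-d.1), t + a2 * (-d.2)) : (Fin n → ℝ) × ℝ)
          + (1 - θ) • (x + a1 • d.1, t + a1 * d.2) = (x, t) := by
        have hne : a1 + a2 ≠ 0 := hsum.ne'
        refine Prod.ext ?_ ?_
        · show θ • (x + a2 • (-d.1)) + (1 - θ) • (x + a1 • d.1) = x
          rw [hθ]
          match_scalars <;> field_simp <;> ring
        · show θ * (t + a2 * (-d.2)) + (1 - θ) * (t + a1 * d.2) = t
          rw [hθ]
          field_simp
          ring
      rw [heq] at hcomb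
      exact hcomb
    · -- reverse direction unbounded : d = (0, dt) with dt < 0
      obtain ⟨hdx0, hdtn⟩ := unbounded_dir A0 b0 c0 A b c hdef hx hbdd2
      have hdx : d.1 = 0 := by
        have := hdx0
        rwa [neg_eq_zero] at this
      have hdt : d.2 < 0 := by
        rcases lt_or_eq_of_le (by linarith : d.2 ≤ 0) with h' | h'
        · exact h'
        · exact absurd (hdne' hdx h') not_false
      obtain ⟨a1, ha1, hm1, hr1⟩ := half_line A0 b0 c0 A b c hx hd1 hbdd1
      have hp1 : (x + a1 • d.1, t + a1 * d.2) ∈ convexHull ℝ (Sepi A0 b0 c0 A b c) :=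
        IH _ (lt_of_lt_of_le hr1 hrank) _ _ hm1 le_rfl
      rw [hdx] at hp1
      simp only [smul_zero, add_zero] at hp1
      have hup := up_closed A0 b0 c0 A b c hp1
        (s := -(a1 * d.2)) (by nlinarith)
      have : t + a1 * d.2 + -(a1 * d.2) = t := by ring
      rw [this] at hup
      exact hup
  · -- forward direction unbounded : d = (0, dt) with dt > 0
    obtain ⟨hdx, hdtp⟩ := unbounded_dir A0 b0 c0 A b c hdef hx hbdd1
    have hdt : 0 < d.2 := by
      rcases lt_or_eq_of_le hdtp with h' | h'
      · exact h'
      · exact absurd (hdne' hdx h'.symm) not_false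
    have hbdd2 : BddAbove {α : ℝ |
        qv A0 b0 c0 A b c (x + α • (-d.1)) (t + α * (-d.2)) ∈ polarCone (Gamma A0 A)} := by
      by_contra hnb
      obtain ⟨_, hdtn⟩ := unbounded_dir A0 b0 c0 A b c hdef hx hnb
      linarith
    obtain ⟨a2, ha2, hm2, hr2⟩ := half_line A0 b0 c0 A b c hx hd2 hbdd2
    have hp2 : (x + a2 • (-d.1), t + a2 * (-d.2)) ∈ convexHull ℝ (Sepi A0 b0 c0 A b c) :=
      IH _ (lt_of_lt_of_le hr2 hrank) _ _ hm2 le_rfl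
    rw [hdx] at hp2
    simp only [neg_zero, smul_zero, add_zero] at hp2
    have hup := up_closed A0 b0 c0 A b c hp2 (s := a2 * d.2) (by positivity)
    have : t + a2 * -d.2 + a2 * d.2 = t := by ring
    rw [this] at hup
    exact hup

end Main4
/-- sufficiency — if `R'(x,t)` is nontrivial at every point of
`S_SDP \ S`, then `conv(S) = S_SDP`. -/
theorem stmt9 {n m : ℕ} (A0 : Matrix (Fin n) (Fin n) ℝ) (b0 : Fin n → ℝ) (c0 : ℝ)
    (A : Fin m → Matrix (Fin n) (Fin n) ℝ) (b : Fin m → Fin n → ℝ) (c : Fin m → ℝ)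
    (hA0 : A0.IsSymm) (hA : ∀ i, (A i).IsSymm)
    (hdef : ∃ g ∈ Gamma1 A0 A, (Amix A0 A 1 g).PosDef)
    (h : ∀ p ∈ SSDP A0 b0 c0 A b c \ Sepi A0 b0 c0 A b c,
      ∀ G : Set (ℝ × (Fin m → ℝ)),
        IsMinFace (polarCone (Gamma A0 A))
          (qVec A0 b0 c0 A b c p.1 - (2 * p.2) • e0) G →
        ∃ d ∈ Rset' A0 b0 c0 A b c p.1 p.2 G, d ≠ 0) :
    convexHull ℝ (Sepi A0 b0 c0 A b c) = SSDP A0 b0 c0 A b c := by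
  
  apply Set.Subset.antisymm
  · exact convexHull_min (Sepi_sub_SSDP A0 b0 c0 A b c) (convex_SSDP A0 b0 c0 A b c)
  · rintro ⟨x, t⟩ hp
    exact main_ind A0 b0 c0 A b c hdef h
      (Module.finrank ℝ (Submodule.span ℝ
        (minFace (polarCone (Gamma A0 A)) (qv A0 b0 c0 A b c x t)))) x t hp le_rfl
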